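/- Every first-countable Lindelöf Hausdorff space has cardinality at most 2^ℵ₀. -/
import Mathlib


open Cardinal Set Filter Topology Order

universe u

namespace ArhangelskiiAux

variable {X : Type u} [TopologicalSpace X] [T2Space X] [FirstCountableTopology X]

/-- A countable open neighborhood basis at each point. -/
noncomputable def nbhd (x : X) (n : ℕ) : Set X :=
  interior ((𝓝 x).exists_antitone_basis.choose n)

lemma isOpen_nbhd (x : X) (n : ℕ) : IsOpen (nbhd x n) := isOpen_interior

lemma mem_nbhd (x : X) (n : ℕ) : x ∈ nbhd x n := by
  have hb := (𝓝 x).exists_antitone_basis.choose_spec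
  exact mem_interior_iff_mem_nhds.2 (hb.1.mem_of_mem trivial)

lemma nbhd_basis (x : X) {s : Set X} (hs : s ∈ 𝓝 x) : ∃ n, nbhd x n ⊆ s := by
  have hb := (𝓝 x).exists_antitone_basis.choose_spec
  obtain ⟨n, -, hn⟩ := hb.1.mem_iff.1 hs
  exact ⟨n, interior_subset.trans hn⟩

/-- For a countable family of basic open sets that fails to cover `X`,
pick a point outside its union. -/
noncomputable def pick (c : ℕ → X × ℕ) : X := by
  classical
  exact if h : ((⋃ n, nbhd (c n).1 (c n).2)ᶜ).Nonempty then h.choose else (c 0).1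


lemma pick_not_mem {c : ℕ → X × ℕ} (h : ((⋃ n, nbhd (c n).1 (c n).2)ᶜ).Nonempty) :
    pick c ∉ ⋃ n, nbhd (c n).1 (c n).2 := by
  classical
  rw [pick, dif_pos h]
  exact h.choose_spec

/-- The one-step operator of the tower. -/
noncomputable def F (x₀ : X) (S : Set X) : Set X :=
  insert x₀ (closure S ∪ pick '' {c | ∀ n, (c n).1 ∈ S})

lemma subset_F (x₀ : X) (S : Set X) : S ⊆ F x₀ S :=
  fun _ hx => Or.inr (Or.inl (subset_closure hx))

lemma closure_subset_F (x₀ : X) (S : Set X) : closure S ⊆ F x₀ S :=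
  fun _ hx => Or.inr (Or.inl hx)

lemma x₀_mem_F (x₀ : X) (S : Set X) : x₀ ∈ F x₀ S := Or.inl rfl

lemma pick_mem_F (x₀ : X) (S : Set X) {c : ℕ → X × ℕ} (hc : ∀ n, (c n).1 ∈ S) :
    pick c ∈ F x₀ S :=
  Or.inr (Or.inr ⟨c, hc, rfl⟩)

/-- In a first-countable Hausdorff space, the closure of a set has cardinality
at most `#S ^ ℵ₀`. -/
lemma mk_closure_le (S : Set X) : #(closure S) ≤ #S ^ ℵ₀ := by
  have h : ∀ y : closure S, ∃ u : ℕ → S, Tendsto (fun n => (u n : X)) atTop (𝓝 (y : X)) := by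
    rintro ⟨y, hy⟩
    obtain ⟨u, hu, hy'⟩ := mem_closure_iff_seq_limit.1 hy
    exact ⟨fun n => ⟨u n, hu n⟩, hy'⟩
  choose u hu using h
  have hinj : Function.Injective u := by
    intro y z hyz
    have : (y : X) = z := tendsto_nhds_unique (hu y) (hyz ▸ hu z)
    exact Subtype.ext this
  calc #(closure S) ≤ #(ℕ → S) := mk_le_of_injective hinj
    _ = #S ^ ℵ₀ := by simp [mk_arrow]

lemma mk_F_le (x₀ : X) (S : Set X) (hS : #S ≤ 𝔠) : #(F x₀ S) ≤ 𝔠 := by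
  have h1 : #(closure S) ≤ 𝔠 := by
    calc #(closure S) ≤ #S ^ ℵ₀ := mk_closure_le S
      _ ≤ 𝔠 ^ ℵ₀ := power_le_power_right hS
      _ = 𝔠 := continuum_power_aleph0
  have h2 : #(pick '' {c : ℕ → X × ℕ | ∀ n, (c n).1 ∈ S}) ≤ 𝔠 := by
    refine mk_image_le.trans ?_
    have hinj : Function.Injective
        (fun c : {c : ℕ → X × ℕ | ∀ n, (c n).1 ∈ S} =>
          (fun n => ((⟨(c.1 n).1, c.2 n⟩ : S), (c.1 n).2) : ℕ → S × ℕ)) := by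
      rintro ⟨c, hc⟩ ⟨d, hd⟩ h
      apply Subtype.ext; funext n
      have h' := congrFun h n
      simp only [Prod.mk.injEq, Subtype.mk.injEq] at h'
      exact Prod.ext h'.1 h'.2
    calc #{c : ℕ → X × ℕ | ∀ n, (c n).1 ∈ S} ≤ #(ℕ → S × ℕ) := mk_le_of_injective hinj
      _ = (#S * ℵ₀) ^ ℵ₀ := by simp [mk_arrow]
      _ ≤ (𝔠 * 𝔠) ^ ℵ₀ := power_le_power_right (mul_le_mul' hS aleph0_le_continuum)
      _ = 𝔠 := by rw [continuum_mul_self, continuum_power_aleph0]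
  calc #(F x₀ S) ≤ #(closure S ∪ pick '' {c : ℕ → X × ℕ | ∀ n, (c n).1 ∈ S} : Set X) + 1 :=
        mk_insert_le
    _ ≤ (#(closure S) + #(pick '' {c : ℕ → X × ℕ | ∀ n, (c n).1 ∈ S})) + 1 :=
        add_le_add (mk_union_le _ _) le_rfl
    _ ≤ (𝔠 + 𝔠) + 1 := add_le_add (add_le_add h1 h2) le_rfl
    _ = 𝔠 := by rw [add_eq_self aleph0_le_continuum, add_one_eq aleph0_le_continuum]

/-- The first uncountable ordinal (in universe `u`). -/
noncomputable def omega1 : Ordinal.{u} := (aleph 1).ord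

lemma omega1_def : omega1 = (Cardinal.aleph 1).ord := rfl

/-- The tower of sets, indexed by ordinals. -/
noncomputable def tower (x₀ : X) (o : Ordinal.{u}) : Set X :=
  F x₀ (⋃ o' : Iio o, tower x₀ o'.1)
termination_by o
decreasing_by exact o'.2

lemma tower_eq (x₀ : X) (o : Ordinal.{u}) :
    tower x₀ o = F x₀ (⋃ o' : Iio o, tower x₀ o'.1) := by
  rw [tower]

lemma tower_mono (x₀ : X) {o₁ o₂ : Ordinal.{u}} (h : o₁ ≤ o₂) :
    tower x₀ o₁ ⊆ tower x₀ o₂ := by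
  rcases eq_or_lt_of_le h with rfl | h
  · exact subset_rfl
  · rw [tower_eq x₀ o₂]
    exact (subset_iUnion (fun o' : Iio o₂ => tower x₀ o'.1) ⟨o₁, h⟩).trans (subset_F _ _)

lemma mk_tower_le (x₀ : X) : ∀ o : Ordinal.{u}, o < omega1 → #(tower x₀ o) ≤ 𝔠 := by
  intro o
  induction o using Ordinal.induction with
  | h o IH =>
    intro ho
    rw [tower_eq]
    apply mk_F_le
    rcases isEmpty_or_nonempty (Iio o) with he | hne
    · rw [iUnion_of_empty]
      simp
    · have hU : lift.{u+1} #(⋃ o' : Iio o, tower x₀ o'.1) ≤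
          lift.{u} #(Iio o) * ⨆ o' : Iio o, lift.{u+1} #(tower x₀ o'.1) :=
        mk_iUnion_le_lift _
      have hcard : lift.{u} #(Iio o) ≤ lift.{u+1} (ℵ₀ : Cardinal.{u}) := by
        rw [Ordinal.mk_Iio_ordinal, Cardinal.lift_lift]
        have : o.card < aleph 1 := Cardinal.lt_ord.1 ho
        rw [← succ_aleph0, lt_succ_iff] at this
        exact Cardinal.lift_le.2 this
      have hsup : ⨆ o' : Iio o, lift.{u+1} #(tower x₀ o'.1) ≤ lift.{u+1} (𝔠 : Cardinal.{u}) := by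
        refine ciSup_le' fun o' => ?_
        exact Cardinal.lift_le.2 (IH o'.1 o'.2 (o'.2.trans ho))
      have := hU.trans (mul_le_mul' hcard hsup)
      rw [← Cardinal.lift_mul, aleph0_mul_continuum] at this
      exact Cardinal.lift_le.1 this

lemma succ_lt_omega1 {o : Ordinal.{u}} (h : o < omega1) : o + 1 < omega1 := by
  rw [Ordinal.add_one_eq_succ]
  exact (Cardinal.isSuccLimit_ord (aleph0_le_aleph 1)).succ_lt h

end ArhangelskiiAux

open ArhangelskiiAux

/-- Every first-countable Lindelöf Hausdorff space has cardinality at most `2^ℵ₀`. -/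
theorem firstCountable_lindelof_card_le {X : Type u} [TopologicalSpace X] [T2Space X]
    [LindelofSpace X] [FirstCountableTopology X] :
    #X ≤ 2 ^ Cardinal.aleph0 := by
  rw [two_power_aleph0]
  rcases isEmpty_or_nonempty X with he | hne
  · simp [mk_eq_zero]
  set x₀ : X := Classical.arbitrary X with hx₀
  set A : Set X := ⋃ o : Iio (omega1 : Ordinal.{u}), tower x₀ o.1 with hA
  -- every countably many ordinals below ω₁ are bounded below ω₁
  have hbound : ∀ f : ℕ → Ordinal.{u}, (∀ n, f n < omega1) →
      ∃ o : Ordinal.{u}, o < omega1 ∧ ∀ n, f n ≤ o := by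
    intro f hf
    refine ⟨⨆ n, f n, ?_, fun n => Ordinal.le_iSup f n⟩
    apply Ordinal.iSup_lt_ord_lift _ hf
    rw [omega1_def, Cardinal.isRegular_aleph_one.cof_eq]
    simpa using aleph0_lt_aleph_one
  -- A is closed
  have hclosed : IsClosed A := by
    rw [← closure_subset_iff_isClosed]
    intro y hy
    obtain ⟨u, hu, hy'⟩ := mem_closure_iff_seq_limit.1 hy
    have : ∀ n, ∃ o : Ordinal.{u}, o < omega1 ∧ u n ∈ tower x₀ o := by
      intro n
      obtain ⟨o, ho⟩ := mem_iUnion.1 (hu n)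
      exact ⟨o.1, o.2, ho⟩
    choose f hf₁ hf₂ using this
    obtain ⟨o, ho, hle⟩ := hbound f hf₁
    have hmem : ∀ n, u n ∈ tower x₀ o := fun n => tower_mono x₀ (hle n) (hf₂ n)
    have hyc : y ∈ closure (tower x₀ o) :=
      mem_closure_of_tendsto hy' (Eventually.of_forall hmem)
    have hsub : tower x₀ o ⊆ ⋃ o' : Iio (o + 1), tower x₀ o'.1 :=
      subset_iUnion (fun o' : Iio (o + 1) => tower x₀ o'.1) ⟨o, lt_add_one o⟩
    have : y ∈ tower x₀ (o + 1) := by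
      rw [tower_eq]
      exact closure_subset_F _ _ (closure_mono hsub hyc)
    exact mem_iUnion.2 ⟨⟨o + 1, succ_lt_omega1 ho⟩, this⟩
  -- A is all of X
  have huniv : A = Set.univ := by
    by_contra h
    obtain ⟨x, hx⟩ : ∃ x : X, x ∉ A := by
      by_contra h'
      push_neg at h'
      exact h (eq_univ_of_forall h')
    -- choose basic neighborhoods avoiding x
    have hsep : ∀ a : X, ∃ n : ℕ, a ∈ A → nbhd a n ⊆ {x}ᶜ := by
      intro a
      by_cases ha : a ∈ A
      · have hax : a ≠ x := fun h => hx (h ▸ ha)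
        have : ({x}ᶜ : Set X) ∈ 𝓝 a :=
          isOpen_compl_singleton.mem_nhds (by simpa using hax)
        obtain ⟨n, hn⟩ := nbhd_basis a this
        exact ⟨n, fun _ => hn⟩
      · exact ⟨0, fun h => absurd h ha⟩
    choose nn hnn using hsep
    -- countable subcover of A
    have hLin : IsLindelof A := hclosed.isLindelof
    obtain ⟨t, htc, htA, hcov⟩ := hLin.elim_nhds_subcover (fun a => nbhd a (nn a))
      (fun a _ => (isOpen_nbhd a (nn a)).mem_nhds (mem_nbhd a (nn a)))
    -- A is nonempty, hence t is nonempty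
    have hx₀A : x₀ ∈ A := by
      refine mem_iUnion.2 ⟨⟨0, ?_⟩, ?_⟩
      · rw [mem_Iio, omega1_def, pos_iff_ne_zero, ne_eq, Cardinal.ord_eq_zero]
        exact (aleph0_lt_aleph_one.trans_le' aleph0_pos.le).ne'
      · rw [tower_eq]; exact x₀_mem_F _ _
    have htne : t.Nonempty := by
      rcases t.eq_empty_or_nonempty with rfl | h
      · simpa using hcov hx₀A
      · exact h
    obtain ⟨f, hft⟩ := htc.exists_eq_range htne
    -- all points of t lie in a single tower stage
    have hfA : ∀ k, f k ∈ A := fun k => htA _ (hft ▸ mem_range_self k)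
    have : ∀ k, ∃ o : Ordinal.{u}, o < omega1 ∧ f k ∈ tower x₀ o := by
      intro k
      obtain ⟨o, ho⟩ := mem_iUnion.1 (hfA k)
      exact ⟨o.1, o.2, ho⟩
    choose g hg₁ hg₂ using this
    obtain ⟨o, ho, hle⟩ := hbound g hg₁
    set c : ℕ → X × ℕ := fun k => (f k, nn (f k)) with hc
    have hcS : ∀ k, (c k).1 ∈ ⋃ o' : Iio (o + 1), tower x₀ o'.1 :=
      fun k => mem_iUnion.2 ⟨⟨o, lt_add_one o⟩, tower_mono x₀ (hle k) (hg₂ k)⟩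
    -- x is outside the union of the chosen basic sets
    have hxV : x ∈ (⋃ k, nbhd (c k).1 (c k).2)ᶜ := by
      simp only [mem_compl_iff, mem_iUnion, not_exists]
      intro k hk
      exact hnn (f k) (hfA k) hk rfl
    have hpickA : pick c ∈ A := by
      refine mem_iUnion.2 ⟨⟨o + 1, succ_lt_omega1 ho⟩, ?_⟩
      rw [tower_eq]
      exact pick_mem_F x₀ _ hcS
    have hpickV : pick c ∈ ⋃ k, nbhd (c k).1 (c k).2 := by
      have := hcov hpickA
      simp only [mem_iUnion] at this ⊢
      obtain ⟨a, hat, ha⟩ := this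
      obtain ⟨k, rfl⟩ : ∃ k, f k = a := by
        have : a ∈ range f := hft ▸ hat
        exact this
      exact ⟨k, ha⟩
    exact pick_not_mem ⟨x, hxV⟩ hpickV
  -- conclude
  have hXA : #X = #A := by rw [huniv, mk_univ]
  rw [hXA]
  · have hU : lift.{u+1} #A ≤
        lift.{u} #(Iio (omega1 : Ordinal.{u})) *
          ⨆ o : Iio (omega1 : Ordinal.{u}), lift.{u+1} #(tower x₀ o.1) := by
      rw [hA]; exact mk_iUnion_le_lift _
    have hcard : lift.{u} #(Iio (omega1 : Ordinal.{u})) ≤ lift.{u+1} (𝔠 : Cardinal.{u}) := by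
      rw [Ordinal.mk_Iio_ordinal, Cardinal.lift_lift]
      simp only [omega1, Cardinal.card_ord]
      exact Cardinal.lift_le.2 aleph_one_le_continuum
    have hsup : ⨆ o : Iio (omega1 : Ordinal.{u}), lift.{u+1} #(tower x₀ o.1) ≤
        lift.{u+1} (𝔠 : Cardinal.{u}) := by
      rcases isEmpty_or_nonempty (Iio (omega1 : Ordinal.{u})) with he' | hne'
      · simp [ciSup_of_empty]
      · exact ciSup_le' fun o => Cardinal.lift_le.2 (mk_tower_le x₀ o.1 o.2)
    have := hU.trans (mul_le_mul' hcard hsup)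
    rw [← Cardinal.lift_mul, continuum_mul_self] at this
    exact Cardinal.lift_le.1 this
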